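/- Interleaving enumeration correctness: Let A be a finite set with a function f : A → K into a linear order K, and suppose A = A_1 ∪ ... ∪ A_m (not necessarily disjoint) where each A_i can be listed as a sequence sorted nondecreasingly by a function f_i : A → K with f_i ≥ f on A_i, and for each a ∈ A there exists i such that a ∈ A_i and f_i(a) = f(a). Consider the process that repeatedly looks at the current head of each sequence, selects a head with minimal f_i-value (ties broken by smallest i), and outputs it only if i is the 'responsible' index of that element (the least i with a ∈ A_i and f_i(a) = f(a)), otherwise skips it; in either case that sequence advances. Then the subsequence of outputs contains every element of A exactly once, and in nondecreasing order of f. -/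

import Mathlib

/-- The current heads of the `m` sequences, tagged with their sequence index. -/
def heads {A : Type*} {m : ℕ} (st : Fin m → List A) : List (Fin m × A) :=
  (List.finRange m).filterMap fun i => (st i).head?.map fun a => (i, a)

/-- One fuelled run of the interleaving enumeration process: repeatedly pick the
head with minimal `f`-value (ties broken by smallest sequence index), output it if
the proposing sequence is its responsible index, otherwise skip; always advance. -/
def runAux {A K : Type*} [LinearOrder K] {m : ℕ}
    (f : Fin m → A → K) (resp : A → Fin m) : ℕ → (Fin m → List A) → List A
  | 0, _ => []
  | fuel + 1, st =>
    match (heads st).argmin (fun p => toLex (f p.1 p.2, p.1)) with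
    | none => []
    | some (i, a) =>
      let st' := Function.update st i (st i).tail
      if resp a = i then a :: runAux f resp fuel st' else runAux f resp fuel st'

lemma mem_heads' {A : Type*} {m : ℕ} {st : Fin m → List A} {i : Fin m} {a : A} :
    (i, a) ∈ heads st ↔ (st i).head? = some a := by
  simp only [heads, List.mem_filterMap, List.mem_finRange, true_and,
    Option.map_eq_some_iff, Prod.mk.injEq]
  constructor
  · rintro ⟨j, b, hb, rfl, rfl⟩; exact hb
  · intro h; exact ⟨i, a, h, rfl, rfl⟩
lemma runAux_spec {A K : Type*} [LinearOrder K] [DecidableEq A] {m : ℕ}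
    (L : Fin m → List A) (f : Fin m → A → K) (fval : A → K) (Aset : Finset A)
    (hmem : ∀ i, ∀ a ∈ L i, a ∈ Aset)
    (hsorted : ∀ i, (L i).Pairwise (fun a b => f i a ≤ f i b))
    (resp : A → Fin m)
    (hrespval : ∀ a ∈ Aset, f (resp a) a = fval a) :
    ∀ fuel (st : Fin m → List A), (∑ i, (st i).length) ≤ fuel →
      (∀ i, (st i).Sublist (L i)) →
      (∀ b, (runAux f resp fuel st).count b = ((st (resp b)).count b)) ∧
      (runAux f resp fuel st).Pairwise (fun a b => fval a ≤ fval b) ∧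
      (∀ b ∈ runAux f resp fuel st, ∃ p ∈ heads st,
        toLex (f p.1 p.2, p.1) ≤ toLex (fval b, resp b)) := by
  intro fuel
  induction fuel with
  | zero =>
    intro st hlen hsub
    have hempty : ∀ j, st j = [] := by
      intro j
      have := Finset.sum_eq_zero_iff.mp (Nat.le_zero.mp hlen) j (Finset.mem_univ j)
      exact List.length_eq_zero_iff.mp this
    refine ⟨fun b => ?_, by simp [runAux], by simp [runAux]⟩
    simp [runAux, hempty]
  | succ fuel ih =>
    intro st hlen hsub
    cases hc : (heads st).argmin (fun p => toLex (f p.1 p.2, p.1)) with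
    | none =>
      have hempty : ∀ j, st j = [] := by
        intro j
        rcases hj : st j with _ | ⟨a, t⟩
        · rfl
        · exfalso
          have : (j, a) ∈ heads st := mem_heads'.mpr (by rw [hj]; rfl)
          rw [List.argmin_eq_none.mp hc] at this
          exact absurd this (List.not_mem_nil)
      refine ⟨fun b => ?_, ?_, ?_⟩
      · simp [runAux, hc, hempty]
      · simp [runAux, hc]
      · simp [runAux, hc]
    | some p =>
      obtain ⟨i, a⟩ := p
      have hpa : (i, a) ∈ heads st := List.argmin_mem hc
      have hhead : (st i).head? = some a := mem_heads'.mp hpa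
      have hcons : st i = a :: (st i).tail :=
        List.eq_cons_of_mem_head? (Option.mem_def.mpr hhead)
      have haL : a ∈ L i := (hsub i).subset (hcons ▸ (List.mem_cons_self : a ∈ a :: (st i).tail))
      have haA : a ∈ Aset := hmem i a haL
      set st' := Function.update st i (st i).tail with hst'
      have hst'i : st' i = (st i).tail := by simp [hst']
      have hst'j : ∀ j, j ≠ i → st' j = st j := by
        intro j hj; simp [hst', Function.update_of_ne hj]
      have hsub' : ∀ j, (st' j).Sublist (L j) := by
        intro j
        by_cases hj : j = i
        · subst hj; rw [hst'i]; exact (List.tail_sublist _).trans (hsub j)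
        · rw [hst'j j hj]; exact hsub j
      have hlen' : (∑ j, (st' j).length) ≤ fuel := by
        have hlt : (∑ j, (st' j).length) < ∑ j, (st j).length := by
          refine Finset.sum_lt_sum (fun j _ => ?_) ⟨i, Finset.mem_univ i, ?_⟩
          · by_cases hj : j = i
            · subst hj
              rw [hst'i]
              exact List.length_tail ▸ Nat.sub_le _ _
            · rw [hst'j j hj]
          · rw [hst'i]
            conv_rhs => rw [hcons]
            simp
        omega
      have hminle : ∀ p ∈ heads st,
          toLex (f i a, i) ≤ toLex (f p.1 p.2, p.1) := by
        intro p hp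
        exact List.le_of_mem_argmin (f := fun p : Fin m × A => toLex (f p.1 p.2, p.1))
          hp (Option.mem_def.mpr hc)
      have hsortedst : (st i).Pairwise (fun a b => f i a ≤ f i b) :=
        List.Pairwise.sublist (hsub i) (hsorted i)
      have hlift : ∀ p ∈ heads st', toLex (f i a, i) ≤ toLex (f p.1 p.2, p.1) := by
        rintro ⟨j, b⟩ hp
        have hb : (st' j).head? = some b := mem_heads'.mp hp
        by_cases hj : j = i
        · subst hj
          rw [hst'i] at hb
          have hbt : b ∈ (st j).tail := List.mem_of_mem_head? (Option.mem_def.mpr hb)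
          have hab : f j a ≤ f j b := by
            rw [hcons] at hsortedst
            exact (List.pairwise_cons.mp hsortedst).1 b hbt
          exact Prod.Lex.toLex_mono (Prod.mk_le_mk.mpr ⟨hab, le_rfl⟩)
        · rw [hst'j j hj] at hb
          exact hminle (j, b) (mem_heads'.mpr hb)
      obtain ⟨ihcount, ihsorted, ihkey⟩ := ih st' hlen' hsub'
      have hkey_out : ∀ b ∈ runAux f resp fuel st',
          ∃ p ∈ heads st, toLex (f p.1 p.2, p.1) ≤ toLex (fval b, resp b) := by
        intro b hb
        obtain ⟨p, hp, hple⟩ := ihkey b hb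
        exact ⟨(i, a), hpa, le_trans (hlift p hp) hple⟩
      have hcount' : ∀ b, (runAux f resp fuel st').count b =
          (if resp b = i then ((st i).tail).count b else (st (resp b)).count b) := by
        intro b
        rw [ihcount b]
        by_cases hb : resp b = i
        · rw [if_pos hb, hb, hst'i]
        · rw [if_neg hb, hst'j _ hb]
      by_cases hra : resp a = i
      · have hout : runAux f resp (fuel + 1) st = a :: runAux f resp fuel st' := by
          rw [runAux, hc]; simp [hra, hst']
        have hfva : f i a = fval a := hra ▸ hrespval a haA
        refine ⟨fun c => ?_, ?_, ?_⟩
        · rw [hout]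
          by_cases hca : c = a
          · subst hca
            rw [List.count_cons_self, hcount' c, if_pos hra, hra]
            conv_rhs => rw [hcons]
            rw [List.count_cons_self]
          · rw [List.count_cons_of_ne (Ne.symm hca), hcount' c]
            by_cases hci : resp c = i
            · rw [if_pos hci, hci]
              conv_rhs => rw [hcons]
              rw [List.count_cons_of_ne (Ne.symm hca)]
            · rw [if_neg hci]
        · rw [hout, List.pairwise_cons]
          refine ⟨fun b hb => ?_, ihsorted⟩
          obtain ⟨p, hp, hple⟩ := ihkey b hb
          have h1 : toLex (fval a, i) ≤ toLex (fval b, resp b) := by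
            rw [← hfva]; exact le_trans (hlift p hp) hple
          exact Prod.Lex.monotone_fst _ _ h1
        · rw [hout]
          intro b hb
          rcases List.mem_cons.mp hb with hba | hb
          · exact ⟨(i, a), hpa, by rw [hba, hfva, hra]⟩
          · exact hkey_out b hb
      · have hout : runAux f resp (fuel + 1) st = runAux f resp fuel st' := by
          rw [runAux, hc]; simp [hra, hst']
        refine ⟨fun c => ?_, by rw [hout]; exact ihsorted, by rw [hout]; exact hkey_out⟩
        rw [hout, hcount' c]
        by_cases hci : resp c = i
        · have hca : c ≠ a := fun h => hra (h ▸ hci)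
          rw [if_pos hci, hci]
          conv_rhs => rw [hcons]
          rw [List.count_cons_of_ne (Ne.symm hca)]
        · rw [if_neg hci]

/-- correctness of the interleaving enumeration: if each sequence
`L i` lists (without duplicates) a subset of `A`, sorted nondecreasingly by `f i`,
with `f i ≥ fval` on it, every `a ∈ A` occurs in some sequence achieving
`f i a = fval a`, and `resp a` is the least such index, then the filtered merge
outputs exactly the elements of `A`, each once, in nondecreasing `fval`-order. -/
theorem interleaving_enumeration_correct {A K : Type*} [LinearOrder K] [DecidableEq A]
    (m : ℕ) (L : Fin m → List A) (f : Fin m → A → K) (fval : A → K) (Aset : Finset A)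
    (hmem : ∀ i, ∀ a ∈ L i, a ∈ Aset)
    (hcover : ∀ a ∈ Aset, ∃ i, a ∈ L i ∧ f i a = fval a)
    (hnodup : ∀ i, (L i).Nodup)
    (hsorted : ∀ i, (L i).Pairwise (fun a b => f i a ≤ f i b))
    (hge : ∀ i, ∀ a ∈ L i, fval a ≤ f i a)
    (resp : A → Fin m)
    (hresp : ∀ a ∈ Aset, a ∈ L (resp a) ∧ f (resp a) a = fval a ∧
      ∀ j, j < resp a → a ∈ L j → f j a ≠ fval a) :
    let out := runAux f resp (∑ i, (L i).length) L
    (∀ a, a ∈ out ↔ a ∈ Aset) ∧ out.Nodup ∧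
      out.Pairwise (fun a b => fval a ≤ fval b) := by
  intro out
  have hrespval : ∀ a ∈ Aset, f (resp a) a = fval a := fun a ha => (hresp a ha).2.1
  obtain ⟨hcount, hsort, -⟩ := runAux_spec L f fval Aset hmem hsorted resp hrespval
    (∑ i, (L i).length) L le_rfl (fun i => List.Sublist.refl _)
  refine ⟨fun a => ?_, ?_, hsort⟩
  · rw [← List.count_pos_iff, hcount, List.count_pos_iff]
    exact ⟨fun h => hmem _ a h, fun h => (hresp a h).1⟩
  · rw [List.nodup_iff_count_le_one]
    intro a
    rw [hcount]
    exact List.nodup_iff_count_le_one.mp (hnodup (resp a)) a
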